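/- arXiv:1011.1236 — 2 statements merged into one kernel-verified Lean document; each statement's English description precedes it below -/
import Mathlib

section
/- The image of the diagonal in Sym²(S¹) (i.e., the set of singletons {x}) corresponds under the homeomorphism Sym²(S¹) ≅ Möbius band to the boundary circle of the band. -/
open Real

/-- Sym²(S¹): the quotient of the torus S¹ × S¹ by the coordinate swap. -/
abbrev SymSqCircle : Type := Quot (fun p q : Circle × Circle => q = (p.2, p.1))

/-- The unit interval [0,1]. -/
abbrev I8 := Set.Icc (0 : ℝ) 1

/-- The Möbius band: the quotient of [0,1]² identifying (0,t) with (1,1−t). -/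
abbrev MobiusBand : Type :=
  Quot (fun p q : I8 × I8 => p.1.1 = 0 ∧ q.1.1 = 1 ∧ q.2.1 = 1 - p.2.1)

/-- The diagonal of Sym²(S¹): the set of singletons {x}. -/
def diag8 : Set SymSqCircle := {s | ∃ x : Circle, s = Quot.mk _ (x, x)}

/-- The boundary circle of the Möbius band: the image of [0,1] × {0,1}. -/
def bdry8 : Set MobiusBand :=
  {m | ∃ p : I8 × I8, (p.2.1 = 0 ∨ p.2.1 = 1) ∧ m = Quot.mk _ p}

abbrev SRel : Circle × Circle → Circle × Circle → Prop := fun p q => q = (p.2, p.1)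
abbrev MRel : I8 × I8 → I8 × I8 → Prop :=
  fun p q => p.1.1 = 0 ∧ q.1.1 = 1 ∧ q.2.1 = 1 - p.2.1

lemma smk_swap (z w : Circle) :
    (Quot.mk SRel (z, w) : SymSqCircle) = Quot.mk SRel (w, z) :=
  Quot.sound rfl

lemma smk_eq_elim {a b c d : Circle}
    (h : (Quot.mk SRel (a, b) : SymSqCircle) = Quot.mk SRel (c, d)) :
    (a = c ∧ b = d) ∨ (a = d ∧ b = c) := by
  have hresp : ∀ p q : Circle × Circle, SRel p q →
      ((p = (c, d) ∨ p = (d, c)) = (q = (c, d) ∨ q = (d, c))) := by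
    rintro ⟨p1, p2⟩ q hq
    subst hq
    simp only [eq_iff_iff, Prod.mk.injEq]
    constructor
    · rintro (⟨h1, h2⟩ | ⟨h1, h2⟩) <;> simp [h1, h2]
    · rintro (⟨h1, h2⟩ | ⟨h1, h2⟩) <;> simp [h1, h2]
  have hP : Quot.lift _ hresp (Quot.mk SRel (c, d)) := Or.inl rfl
  rw [← h] at hP
  have hP' : ((a, b) = (c, d) ∨ (a, b) = (d, c)) := hP
  rcases hP' with h' | h' <;> [left; right] <;>
    exact ⟨congrArg Prod.fst h', congrArg Prod.snd h'⟩

/-- The defining map of the homeomorphism. -/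
noncomputable def fmap (p : I8 × I8) : SymSqCircle :=
  Quot.mk SRel (Circle.exp (π * p.1.1 + π * p.2.1), Circle.exp (π * p.1.1 - π * p.2.1))

lemma fmap_resp : ∀ p q : I8 × I8, MRel p q → fmap p = fmap q := by
  rintro ⟨x, t⟩ ⟨x', t'⟩ ⟨h0, h1, ht⟩
  unfold fmap
  simp only at h0 h1 ht ⊢
  rw [h0, h1, ht]
  have e1 : Circle.exp (π * 1 + π * (1 - t.1)) = Circle.exp (π * 0 - π * t.1) := by
    have := Circle.periodic_exp (π * 0 - π * t.1)
    rw [← this]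
    congr 1
    ring
  have e2 : Circle.exp (π * 1 - π * (1 - t.1)) = Circle.exp (π * 0 + π * t.1) := by
    congr 1
    ring
  rw [e1, e2, smk_swap]

/-- The induced map Möbius band → Sym²(S¹). -/
noncomputable def Fmap : MobiusBand → SymSqCircle := Quot.lift fmap fmap_resp

lemma Fmap_continuous : Continuous Fmap := by
  apply continuous_quot_lift
  apply Continuous.comp (continuous_quot_mk)
  apply Continuous.prodMk
  · exact Circle.exp.continuous.comp (by fun_prop)
  · exact Circle.exp.continuous.comp (by fun_prop)

/-- Key arithmetic lemma. -/
lemma key {x t x' t' : ℝ} (k l : ℤ)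
    (hx0 : 0 ≤ x) (hx1 : x ≤ 1) (ht0 : 0 ≤ t) (ht1 : t ≤ 1)
    (hx0' : 0 ≤ x') (hx1' : x' ≤ 1) (ht0' : 0 ≤ t') (ht1' : t' ≤ 1)
    (h : (x + t = x' + t' + 2 * k ∧ x - t = x' - t' + 2 * l) ∨
         (x + t = x' - t' + 2 * k ∧ x - t = x' + t' + 2 * l)) :
    (x = x' ∧ t = t') ∨ (x = 0 ∧ x' = 1 ∧ t' = 1 - t) ∨ (x' = 0 ∧ x = 1 ∧ t = 1 - t') := by
  have hklR : ((k + l : ℤ) : ℝ) = x - x' := by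
    push_cast
    rcases h with ⟨h1, h2⟩ | ⟨h1, h2⟩ <;> linarith
  have hkl : k + l = -1 ∨ k + l = 0 ∨ k + l = 1 := by
    have h1 : ((-1 : ℤ) : ℝ) ≤ (k + l : ℤ) := by rw [hklR]; push_cast; linarith
    have h2 : ((k + l : ℤ) : ℝ) ≤ ((1 : ℤ) : ℝ) := by rw [hklR]; push_cast; linarith
    have := Int.cast_le.mp h1
    have := Int.cast_le.mp h2
    omega
  rcases h with ⟨h1, h2⟩ | ⟨h1, h2⟩
  · -- unswapped case: t - t' = k - l
    have hdR : ((k - l : ℤ) : ℝ) = t - t' := by push_cast; linarith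
    have hd : k - l = -1 ∨ k - l = 0 ∨ k - l = 1 := by
      have ha : ((-1 : ℤ) : ℝ) ≤ (k - l : ℤ) := by rw [hdR]; push_cast; linarith
      have hb : ((k - l : ℤ) : ℝ) ≤ ((1 : ℤ) : ℝ) := by rw [hdR]; push_cast; linarith
      have := Int.cast_le.mp ha
      have := Int.cast_le.mp hb
      omega
    rcases hkl with hs | hs | hs
    · -- x - x' = -1 : x = 0, x' = 1
      have hxx : x - x' = -1 := by rw [← hklR, hs]; norm_num
      have hkd : k - l = -1 ∨ k - l = 1 := by omega
      right; left
      refine ⟨by linarith, by linarith, ?_⟩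
      rcases hkd with hkd | hkd
      · have : t - t' = -1 := by rw [← hdR, hkd]; norm_num
        linarith
      · have : t - t' = 1 := by rw [← hdR, hkd]; norm_num
        linarith
    · have hxx : x - x' = 0 := by rw [← hklR, hs]; norm_num
      have hkd : k - l = 0 := by omega
      have : t - t' = 0 := by rw [← hdR, hkd]; norm_num
      exact Or.inl ⟨by linarith, by linarith⟩
    · have hxx : x - x' = 1 := by rw [← hklR, hs]; norm_num
      have hkd : k - l = -1 ∨ k - l = 1 := by omega
      right; right
      refine ⟨by linarith, by linarith, ?_⟩
      rcases hkd with hkd | hkd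
      · have : t - t' = -1 := by rw [← hdR, hkd]; norm_num
        linarith
      · have : t - t' = 1 := by rw [← hdR, hkd]; norm_num
        linarith
  · -- swapped case: t + t' = k - l
    have hdR : ((k - l : ℤ) : ℝ) = t + t' := by push_cast; linarith
    have hd : k - l = 0 ∨ k - l = 1 ∨ k - l = 2 := by
      have ha : ((0 : ℤ) : ℝ) ≤ (k - l : ℤ) := by rw [hdR]; push_cast; linarith
      have hb : ((k - l : ℤ) : ℝ) ≤ ((2 : ℤ) : ℝ) := by rw [hdR]; push_cast; linarith
      have := Int.cast_le.mp ha
      have := Int.cast_le.mp hb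
      omega
    rcases hkl with hs | hs | hs
    · have hxx : x - x' = -1 := by rw [← hklR, hs]; norm_num
      have hkd : k - l = 1 := by omega
      have : t + t' = 1 := by rw [← hdR, hkd]; norm_num
      exact Or.inr (Or.inl ⟨by linarith, by linarith, by linarith⟩)
    · have hxx : x - x' = 0 := by rw [← hklR, hs]; norm_num
      have hkd : k - l = 0 ∨ k - l = 2 := by omega
      left
      refine ⟨by linarith, ?_⟩
      rcases hkd with hkd | hkd
      · have : t + t' = 0 := by rw [← hdR, hkd]; norm_num
        linarith
      · have : t + t' = 2 := by rw [← hdR, hkd]; norm_num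
        linarith
    · have hxx : x - x' = 1 := by rw [← hklR, hs]; norm_num
      have hkd : k - l = 1 := by omega
      have : t + t' = 1 := by rw [← hdR, hkd]; norm_num
      exact Or.inr (Or.inr ⟨by linarith, by linarith, by linarith⟩)

lemma fmap_inj (p q : I8 × I8) (h : fmap p = fmap q) :
    (Quot.mk MRel p : MobiusBand) = Quot.mk MRel q := by
  obtain ⟨⟨x, hx0, hx1⟩, ⟨t, ht0, ht1⟩⟩ := p
  obtain ⟨⟨x', hx0', hx1'⟩, ⟨t', ht0', ht1'⟩⟩ := q
  unfold fmap at h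
  simp only at h
  have h' := smk_eq_elim h
  have hpi : (0:ℝ) < π := pi_pos
  have hcases : (x = x' ∧ t = t') ∨ (x = 0 ∧ x' = 1 ∧ t' = 1 - t) ∨
      (x' = 0 ∧ x = 1 ∧ t = 1 - t') := by
    rcases h' with ⟨h1, h2⟩ | ⟨h1, h2⟩
    · obtain ⟨k, hk⟩ := Circle.exp_eq_exp.mp h1
      obtain ⟨l, hl⟩ := Circle.exp_eq_exp.mp h2
      refine key k l hx0 hx1 ht0 ht1 hx0' hx1' ht0' ht1' (Or.inl ⟨?_, ?_⟩)
      · have := hk; field_simp at this ⊢; nlinarith [this]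
      · have := hl; field_simp at this ⊢; nlinarith [this]
    · obtain ⟨k, hk⟩ := Circle.exp_eq_exp.mp h1
      obtain ⟨l, hl⟩ := Circle.exp_eq_exp.mp h2
      refine key k l hx0 hx1 ht0 ht1 hx0' hx1' ht0' ht1' (Or.inr ⟨?_, ?_⟩)
      · have := hk; nlinarith [this]
      · have := hl; nlinarith [this]
  rcases hcases with ⟨h1, h2⟩ | ⟨h1, h2, h3⟩ | ⟨h1, h2, h3⟩
  · subst h1; subst h2; rfl
  · exact Quot.sound ⟨h1, h2, h3⟩
  · exact (Quot.sound ⟨h1, h2, h3⟩).symm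

lemma Fmap_inj : Function.Injective Fmap := by
  intro a b
  induction a using Quot.ind with | _ p =>
  induction b using Quot.ind with | _ q =>
  exact fmap_inj p q

lemma fmap_surj_aux (z w : Circle) (hab : Complex.arg (w : ℂ) ≤ Complex.arg (z : ℂ)) :
    ∃ p : I8 × I8, fmap p = Quot.mk SRel (z, w) := by
  set a := Complex.arg (z : ℂ) with ha
  set b := Complex.arg (w : ℂ) with hb
  have hpi : (0:ℝ) < π := pi_pos
  have haI : -π < a ∧ a ≤ π := ⟨Complex.neg_pi_lt_arg _, Complex.arg_le_pi _⟩
  have hbI : -π < b ∧ b ≤ π := ⟨Complex.neg_pi_lt_arg _, Complex.arg_le_pi _⟩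
  have hza : Circle.exp a = z := Circle.exp_arg z
  have hwb : Circle.exp b = w := Circle.exp_arg w
  set m := (a + b) / 2 with hm
  set d := (a - b) / 2 with hd
  have hd0 : 0 ≤ d := by simp [hd]; linarith
  have hdpi : d < π := by simp [hd]; linarith [haI.2, hbI.1]
  by_cases hm0 : 0 ≤ m
  · have hmpi : m ≤ π := by simp [hm]; linarith [haI.2, hbI.2]
    refine ⟨(⟨m / π, div_nonneg hm0 hpi.le, (div_le_one hpi).mpr hmpi⟩,
             ⟨d / π, div_nonneg hd0 hpi.le, (div_le_one hpi).mpr hdpi.le⟩), ?_⟩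
    unfold fmap
    simp only
    have e1 : π * (m / π) + π * (d / π) = a := by field_simp; linarith
    have e2 : π * (m / π) - π * (d / π) = b := by field_simp; linarith
    rw [e1, e2, hza, hwb]
  · push_neg at hm0
    have hmpi : -π < m := by simp [hm]; linarith [haI.1, hbI.1]
    have h1 : 0 ≤ (m + π) / π := div_nonneg (by linarith) hpi.le
    have h2 : (m + π) / π ≤ 1 := (div_le_one hpi).mpr (by linarith)
    have h3 : 0 ≤ (π - d) / π := div_nonneg (by linarith) hpi.le
    have h4 : (π - d) / π ≤ 1 := (div_le_one hpi).mpr (by linarith)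
    refine ⟨(⟨(m + π) / π, h1, h2⟩, ⟨(π - d) / π, h3, h4⟩), ?_⟩
    unfold fmap
    simp only
    have e1 : π * ((m + π) / π) + π * ((π - d) / π) = b + 2 * π := by field_simp; linarith
    have e2 : π * ((m + π) / π) - π * ((π - d) / π) = a := by field_simp; linarith
    rw [e1, e2, hza]
    have : Circle.exp (b + 2 * π) = w := by
      rw [Circle.periodic_exp b, hwb]
    rw [this, smk_swap]

lemma Fmap_surj : Function.Surjective Fmap := by
  intro s
  induction s using Quot.ind with | _ zw =>
  obtain ⟨z, w⟩ := zw
  rcases le_total (Complex.arg (w : ℂ)) (Complex.arg (z : ℂ)) with h | h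
  · obtain ⟨p, hp⟩ := fmap_surj_aux z w h
    exact ⟨Quot.mk MRel p, hp⟩
  · obtain ⟨p, hp⟩ := fmap_surj_aux w z h
    refine ⟨Quot.mk MRel p, ?_⟩
    show fmap p = _
    rw [hp, smk_swap]

noncomputable def gsym : SymSqCircle → ℂ × ℂ :=
  Quot.lift (fun p => ((p.1 : ℂ) + (p.2 : ℂ), (p.1 : ℂ) * (p.2 : ℂ)))
    (by rintro ⟨z, w⟩ q rfl; simp only; rw [add_comm, mul_comm])

lemma gsym_inj : Function.Injective gsym := by
  intro s s'
  induction s using Quot.ind with | _ p =>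
  induction s' using Quot.ind with | _ q =>
  obtain ⟨z, w⟩ := p
  obtain ⟨z', w'⟩ := q
  intro h
  have h1 : (z : ℂ) + w = (z' : ℂ) + w' := congrArg Prod.fst h
  have h2 : (z : ℂ) * w = (z' : ℂ) * w' := congrArg Prod.snd h
  have hz : ((z' : ℂ) - z) * ((z' : ℂ) - w) = 0 := by linear_combination (-(z' : ℂ)) * h1 + h2
  rcases mul_eq_zero.mp hz with h0 | h0
  · have hzz : (z : ℂ) = z' := by linear_combination -h0
    have hww : (w : ℂ) = w' := by linear_combination h1 - hzz
    have : z = z' := Subtype.ext hzz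
    have : w = w' := Subtype.ext hww
    subst ‹z = z'›; subst ‹w = w'›; rfl
  · have hzw : (w : ℂ) = z' := by linear_combination -h0
    have hwz : (z : ℂ) = w' := by linear_combination h1 - hzw
    have e1 : w = z' := Subtype.ext hzw
    have e2 : z = w' := Subtype.ext hwz
    subst e1; subst e2
    exact smk_swap _ _
  
lemma gsym_cont : Continuous gsym := by
  apply continuous_quot_lift
  fun_prop

instance : T2Space SymSqCircle := T2Space.of_injective_continuous gsym_inj gsym_cont

noncomputable def mobHomeo : MobiusBand ≃ₜ SymSqCircle :=
  Continuous.homeoOfEquivCompactToT2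
    (f := Equiv.ofBijective Fmap ⟨Fmap_inj, Fmap_surj⟩) Fmap_continuous

lemma image_bdry : mobHomeo '' bdry8 = diag8 := by
  ext s
  constructor
  · rintro ⟨m, ⟨⟨⟨x, hx⟩, ⟨t, ht⟩⟩, htt, rfl⟩, rfl⟩
    show fmap _ ∈ diag8
    rcases htt with h0 | h1
    · simp only at h0
      subst h0
      refine ⟨Circle.exp (π * x), ?_⟩
      unfold fmap
      simp only
      congr 2 <;> · congr 1; ring
    · simp only at h1
      subst h1
      refine ⟨Circle.exp (π * x + π), ?_⟩
      unfold fmap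
      simp only
      congr 2
      · congr 1; ring
      · rw [show π * x - π * 1 = (π * x + π) - 2 * π by ring, Circle.periodic_exp.sub_eq]
  · rintro ⟨c, rfl⟩
    set a := Complex.arg (c : ℂ) with ha
    have hpi : (0:ℝ) < π := pi_pos
    have haI : -π < a ∧ a ≤ π := ⟨Complex.neg_pi_lt_arg _, Complex.arg_le_pi _⟩
    have hca : Circle.exp a = c := Circle.exp_arg c
    by_cases h0 : 0 ≤ a
    · refine ⟨Quot.mk MRel (⟨a / π, div_nonneg h0 hpi.le, (div_le_one hpi).mpr haI.2⟩,
        ⟨0, le_refl _, zero_le_one⟩), ⟨_, Or.inl rfl, rfl⟩, ?_⟩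
      show fmap _ = _
      unfold fmap
      simp only
      have e1 : π * (a / π) + π * 0 = a := by field_simp; simp
      have e2 : π * (a / π) - π * 0 = a := by field_simp; simp
      rw [e1, e2, hca]
    · push_neg at h0
      have h1 : 0 ≤ (a + π) / π := div_nonneg (by linarith [haI.1]) hpi.le
      have h2 : (a + π) / π ≤ 1 := (div_le_one hpi).mpr (by linarith)
      refine ⟨Quot.mk MRel (⟨(a + π) / π, h1, h2⟩, ⟨1, zero_le_one, le_refl _⟩),
        ⟨_, Or.inr rfl, rfl⟩, ?_⟩
      show fmap _ = _
      unfold fmap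
      simp only
      have e1 : π * ((a + π) / π) + π * 1 = a + 2 * π := by field_simp; ring
      have e2 : π * ((a + π) / π) - π * 1 = a := by field_simp; ring
      rw [e1, e2, hca]
      rw [Circle.periodic_exp a, hca]

/-- There is a homeomorphism Sym²(S¹) ≅ Möbius band carrying the diagonal
onto the boundary circle of the band. -/
theorem stmt8 : ∃ h : SymSqCircle ≃ₜ MobiusBand, h '' diag8 = bdry8 := by
  refine ⟨mobHomeo.symm, ?_⟩
  rw [← image_bdry, ← Set.image_comp]
  have : (mobHomeo.symm ∘ mobHomeo) = id := by
    ext x; exact mobHomeo.symm_apply_apply x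
  rw [this, Set.image_id]
end

section
/- The map from the quotient of the triangle {(x,y) : 0 ≤ x ≤ y ≤ 1} by the identification (0, x) ∼ (x, 1) to Sym²(S¹) induced by t ↦ exp(2πit) is a homeomorphism. -/
set_option linter.unnecessarySimpa false

open Real

/-- The closed triangle {(x,y) : 0 ≤ x ≤ y ≤ 1}. -/
abbrev Tri18 : Type := {p : ℝ × ℝ // 0 ≤ p.1 ∧ p.1 ≤ p.2 ∧ p.2 ≤ 1}

/-- The quotient of the triangle by the identification (0, x) ∼ (x, 1). -/
abbrev TriQuot : Type :=
  Quot (fun p q : Tri18 => p.1.1 = 0 ∧ q.1.1 = p.1.2 ∧ q.1.2 = 1)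

instance : CompactSpace Tri18 := by
  have hc : IsCompact {p : ℝ × ℝ | 0 ≤ p.1 ∧ p.1 ≤ p.2 ∧ p.2 ≤ 1} := by
    apply IsCompact.of_isClosed_subset (isCompact_Icc (a := ((0:ℝ),(0:ℝ))) (b := (1,1)))
    · exact (isClosed_le continuous_const continuous_fst).inter
        ((isClosed_le continuous_fst continuous_snd).inter
          (isClosed_le continuous_snd continuous_const))
    · rintro ⟨x, y⟩ ⟨h1, h2, h3⟩
      exact ⟨⟨h1, h1.trans h2⟩, ⟨h2.trans h3, h3⟩⟩
  exact isCompact_iff_compactSpace.mp hc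

noncomputable def symVal : SymSqCircle → ℂ × ℂ :=
  Quot.lift (fun p => ((p.1 : ℂ) + p.2, (p.1 : ℂ) * p.2)) (by
    rintro p q rfl
    simp [add_comm, mul_comm])

lemma vieta {a b c d : ℂ} (h1 : a + b = c + d) (h2 : a * b = c * d) :
    (c = a ∧ d = b) ∨ (c = b ∧ d = a) := by
  have h : (c - a) * (c - b) = 0 := by linear_combination (-c) * h1 + h2
  rcases mul_eq_zero.mp h with h | h
  · left
    have hc : c = a := by linear_combination h
    exact ⟨hc, by linear_combination - h1 - hc⟩
  · right
    have hc : c = b := by linear_combination h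
    exact ⟨hc, by linear_combination - h1 - hc⟩

lemma symVal_cont : Continuous symVal := by
  apply continuous_quot_lift
  fun_prop

lemma symVal_inj : Function.Injective symVal := by
  intro u v
  refine Quot.induction_on₂ u v ?_
  rintro ⟨a, b⟩ ⟨c, d⟩ h
  have hsum : (a : ℂ) + b = c + d := congrArg Prod.fst h
  have hmul : (a : ℂ) * b = c * d := congrArg Prod.snd h
  rcases vieta hsum hmul with ⟨h3, h4⟩ | ⟨h3, h4⟩
  · have hc : c = a := Subtype.coe_injective h3
    have hd : d = b := Subtype.coe_injective h4
    rw [hc, hd]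
  · have hc : c = b := Subtype.coe_injective h3
    have hd : d = a := Subtype.coe_injective h4
    rw [hc, hd]
    exact Quot.sound rfl

instance inst_s18 : T2Space SymSqCircle := T2Space.of_injective_continuous symVal_inj symVal_cont

lemma symPair_eq {a b c d : Circle}
    (h : (Quot.mk _ (a, b) : SymSqCircle) = Quot.mk _ (c, d)) :
    (c = a ∧ d = b) ∨ (c = b ∧ d = a) := by
  have h1 := congrArg symVal h
  have hsum : (a : ℂ) + b = c + d := congrArg Prod.fst h1
  have hmul : (a : ℂ) * b = c * d := congrArg Prod.snd h1
  rcases vieta hsum hmul with ⟨h3, h4⟩ | ⟨h3, h4⟩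
  · exact Or.inl ⟨Subtype.coe_injective h3, Subtype.coe_injective h4⟩
  · exact Or.inr ⟨Subtype.coe_injective h3, Subtype.coe_injective h4⟩

lemma exp_unit {a b : ℝ} (ha : 0 ≤ a) (ha1 : a ≤ 1) (hb : 0 ≤ b) (hb1 : b ≤ 1)
    (h : Circle.exp (2 * π * a) = Circle.exp (2 * π * b)) :
    a = b ∨ (a = 0 ∧ b = 1) ∨ (a = 1 ∧ b = 0) := by
  obtain ⟨m, hm⟩ := Circle.exp_eq_exp.mp h
  have hπ : (0 : ℝ) < π := pi_pos
  have hab : a = b + m := by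
    have h2 : 2 * π * a = 2 * π * (b + m) := by linarith [hm]
    exact mul_left_cancel₀ (by positivity) h2
  have hm1 : (-1 : ℝ) ≤ (m : ℝ) := by linarith
  have hm2 : (m : ℝ) ≤ 1 := by linarith
  have hm1' : (-1 : ℤ) ≤ m := by exact_mod_cast hm1
  have hm2' : m ≤ (1 : ℤ) := by exact_mod_cast hm2
  interval_cases m
  · right; left
    push_cast at hab
    constructor <;> linarith
  · left; push_cast at hab; linarith
  · right; right
    push_cast at hab
    constructor <;> linarith

lemma exp_surj' (z : Circle) : ∃ t : ℝ, 0 ≤ t ∧ t ≤ 1 ∧ Circle.exp (2 * π * t) = z := by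
  have hπ : (0 : ℝ) < π := pi_pos
  set t0 : ℝ := Complex.arg z / (2 * π) with ht0
  refine ⟨Int.fract t0, Int.fract_nonneg t0, (Int.fract_lt_one t0).le, ?_⟩
  have key : Circle.exp (2 * π * Int.fract t0) = Circle.exp (Complex.arg z) := by
    apply Circle.exp_eq_exp.mpr
    refine ⟨-⌊t0⌋, ?_⟩
    have h2π : (2 : ℝ) * π ≠ 0 := by positivity
    rw [Int.fract]
    push_cast
    field_simp [ht0]
    have : t0 * (2 * π) = Complex.arg z := by rw [ht0]; field_simp
    linarith
  rw [key, Circle.exp_arg]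

abbrev triRel := fun p q : Tri18 => p.1.1 = 0 ∧ q.1.1 = p.1.2 ∧ q.1.2 = 1

lemma mk_eq_of (p q : Tri18) (h1 : p.1.1 = 0) (h2 : q.1.1 = p.1.2) (h3 : q.1.2 = 1) :
    (Quot.mk triRel p : TriQuot) = Quot.mk triRel q := Quot.sound ⟨h1, h2, h3⟩

def tri01 : Tri18 := ⟨(0, 1), le_refl _, zero_le_one, le_refl _⟩

noncomputable def F : Tri18 → SymSqCircle := fun p =>
  Quot.mk _ (Circle.exp (2 * π * p.1.1), Circle.exp (2 * π * p.1.2))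

lemma F_sound : ∀ p q : Tri18, triRel p q → F p = F q := by
  rintro ⟨⟨x, y⟩, hp⟩ ⟨⟨x', y'⟩, hq⟩ ⟨h1, h2, h3⟩
  simp only at h1 h2 h3
  subst h1 h2 h3
  unfold F
  simp only
  have e1 : Circle.exp (2 * π * 0) = 1 := by rw [mul_zero, Circle.exp_zero]
  have e2 : Circle.exp (2 * π * 1) = 1 := by
    rw [mul_one]
    simpa using Circle.periodic_exp 0 -- lint ok
    
  rw [e1, e2]
  exact Quot.sound rfl

noncomputable def Fq : TriQuot → SymSqCircle := Quot.lift F F_sound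

lemma Fq_cont : Continuous Fq := by
  apply continuous_quot_lift
  unfold F
  apply continuous_quot_mk.comp
  fun_prop

lemma Fq_inj : Function.Injective Fq := by
  intro u v
  refine Quot.induction_on₂ u v ?_
  rintro ⟨⟨x, y⟩, hx0, hxy, hy1⟩ ⟨⟨x', y'⟩, hx0', hxy', hy1'⟩ h
  have h' := symPair_eq h
  rcases h' with ⟨h1, h2⟩ | ⟨h1, h2⟩
  · -- exp x' = exp x, exp y' = exp y
    rcases exp_unit hx0' (hxy'.trans hy1') hx0 (hxy.trans hy1) h1 with
      hxx | ⟨hA, hB⟩ | ⟨hA, hB⟩ <;>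
    rcases exp_unit (hx0'.trans hxy') hy1' (hx0.trans hxy) hy1 h2 with
      hyy | ⟨hC, hD⟩ | ⟨hC, hD⟩
    · refine congrArg (Quot.mk _) (Subtype.ext ?_)
      simp only [Prod.mk.injEq]
      exact ⟨hxx.symm, hyy.symm⟩
    · -- x'=x, y'=0, y=1 : q=(0,0), p=(0,1)
      exact (mk_eq_of _ _ (show x' = 0 by linarith) (show x = y' by linarith)
        (show y = 1 from hD)).symm
    · -- x'=x, y'=1, y=0 : p=(0,0), q=(0,1)
      exact mk_eq_of _ _ (show x = 0 by linarith) (show x' = y by linarith)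
        (show y' = 1 from hC)
    · -- x'=0, x=1 (so y=1), y'=y=1 : q=(0,1), p=(1,1)
      exact (mk_eq_of _ _ (show x' = 0 from hA) (show x = y' by linarith)
        (show y = 1 by linarith)).symm
    · -- x'=0, x=1, y'=0, y=1 : q=(0,0), p=(1,1) via tri01
      refine ((mk_eq_of _ tri01 ?_ ?_ rfl).trans (mk_eq_of tri01 _ rfl ?_ ?_)).symm
      · exact hA
      · show (0:ℝ) = y'; linarith
      · show x = 1; linarith
      · show y = 1; linarith
    · -- x'=0, x=1 but y'=1, y=0 : contradiction (x ≤ y)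
      exfalso; linarith
    · -- x'=1, x=0 (so y'=1), y'=y : p=(0,1), q=(1,1)
      exact mk_eq_of _ _ (show x = 0 from hB) (show x' = y by linarith)
        (show y' = 1 by linarith)
    · -- x'=1, y'=0 contradiction
      exfalso; linarith
    · -- x'=1, x=0, y'=1, y=0 : p=(0,0), q=(1,1) via tri01
      refine (mk_eq_of _ tri01 ?_ ?_ rfl).trans (mk_eq_of tri01 _ rfl ?_ ?_)
      · exact hB
      · show (0:ℝ) = y; linarith
      · show x' = 1; linarith
      · show y' = 1; linarith
  · -- exp x' = exp y, exp y' = exp x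
    rcases exp_unit hx0' (hxy'.trans hy1') (hx0.trans hxy) hy1 h1 with
      hxy2 | ⟨hA, hB⟩ | ⟨hA, hB⟩ <;>
    rcases exp_unit (hx0'.trans hxy') hy1' hx0 (hxy.trans hy1) h2 with
      hyx2 | ⟨hC, hD⟩ | ⟨hC, hD⟩
    · -- x'=y, y'=x : all equal
      refine congrArg (Quot.mk _) (Subtype.ext ?_)
      simp only [Prod.mk.injEq]
      constructor <;> linarith
    · -- x'=y, y'=0, x=1 : contradiction
      exfalso; linarith
    · -- x'=y, y'=1, x=0 : p=(0,y), q=(y,1)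
      exact mk_eq_of _ _ (show x = 0 from hD) (show x' = y from hxy2)
        (show y' = 1 from hC)
    · -- x'=0, y=1, y'=x : q=(0,x), p=(x,1)
      exact (mk_eq_of _ _ (show x' = 0 from hA) (show x = y' from hyx2.symm)
        (show y = 1 from hB)).symm
    · -- x'=0, y=1, y'=0, x=1 : q=(0,0), p=(1,1)
      refine ((mk_eq_of _ tri01 ?_ ?_ rfl).trans (mk_eq_of tri01 _ rfl ?_ ?_)).symm
      · exact hA
      · show (0:ℝ) = y'; linarith
      · show x = 1; linarith
      · show y = 1; linarith
    · -- x'=0, y=1, y'=1, x=0 : p=(0,1)=q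
      refine congrArg (Quot.mk _) (Subtype.ext ?_)
      simp only [Prod.mk.injEq]
      constructor <;> linarith
    · -- x'=1, y=0, y'=x : y' = x ≤ y = 0 but x'=1 ≤ y' : contradiction
      exfalso; linarith
    · -- x'=1, y=0, y'=0, x=1 : x=1 ≤ y=0 contradiction
      exfalso; linarith
    · -- x'=1, y=0, y'=1, x=0 : p=(0,0), q=(1,1)
      refine (mk_eq_of _ tri01 ?_ ?_ rfl).trans (mk_eq_of tri01 _ rfl ?_ ?_)
      · exact hD
      · show (0:ℝ) = y; linarith
      · show x' = 1; linarith
      · show y' = 1; linarith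

lemma Fq_surj : Function.Surjective Fq := by
  intro z
  refine Quot.induction_on z ?_
  rintro ⟨a, b⟩
  obtain ⟨s, hs0, hs1, hsa⟩ := exp_surj' a
  obtain ⟨t, ht0, ht1, htb⟩ := exp_surj' b
  rcases le_total s t with hst | hts
  · refine ⟨Quot.mk _ ⟨(s, t), hs0, hst, ht1⟩, ?_⟩
    show Quot.mk _ (Circle.exp (2 * π * s), Circle.exp (2 * π * t)) = _
    rw [hsa, htb]
  · refine ⟨Quot.mk _ ⟨(t, s), ht0, hts, hs1⟩, ?_⟩
    show Quot.mk _ (Circle.exp (2 * π * t), Circle.exp (2 * π * s)) = _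
    rw [hsa, htb]
    exact Quot.sound rfl

/-- The map (x,y) ↦ [e^{2πix}, e^{2πiy}] descends to a homeomorphism from the
triangle with (0,x) ∼ (x,1) identified onto Sym²(S¹). -/
theorem stmt18 :
    ∃ h : TriQuot ≃ₜ SymSqCircle,
      ∀ p : Tri18,
        h (Quot.mk _ p) =
          Quot.mk _ (Circle.exp (2 * π * p.1.1), Circle.exp (2 * π * p.1.2)) := by
  let e : TriQuot ≃ SymSqCircle := Equiv.ofBijective Fq ⟨Fq_inj, Fq_surj⟩
  have hc : Continuous e := Fq_cont
  exact ⟨hc.homeoOfEquivCompactToT2, fun p => rfl⟩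
end
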